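/- Correctness of the bit-reversal allocation algorithm: let M = 2^m, and suppose requests of sizes 2^{n_1} ≥ 2^{n_2} ≥ ... ≥ 2^{n_K} (sorted in descending order) satisfy Σ_{k=1}^{K} 2^{n_k} ≤ 2^m. Allocate contiguous bins greedily: request k receives bins {s_k, s_k+1, ..., s_k + 2^{n_k} − 1} where s_k = Σ_{j<k} 2^{n_j}. Then for every k, the image of request k's bins under the m-bit bit-reversal map ρ_m is an evenly spaced set of the form {d_k + j·2^{m−n_k} : j = 0,...,2^{n_k}−1} for some d_k, and the images for distinct requests are pairwise disjoint. -/

import Mathlib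

/-- `bitRev m k` is the `m`-bit bit-reversal of `k`. -/
def bitRev (m k : ℕ) : ℕ :=
  ∑ i ∈ Finset.range m, (k / 2 ^ i % 2) * 2 ^ (m - 1 - i)

lemma bitRev_succ (m k : ℕ) : bitRev (m+1) k = k % 2 * 2^m + bitRev m (k/2) := by
  unfold bitRev
  rw [Finset.sum_range_succ']
  rw [add_comm]
  congr 1
  · simp
  · apply Finset.sum_congr rfl
    intro i hi
    rw [Nat.div_div_eq_div_mul]
    congr 2
    · congr 1; rw [pow_succ']
    · omega

lemma bitRev_succ' (m k : ℕ) : bitRev (m+1) k = k / 2^m % 2 + 2 * bitRev m k := by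
  unfold bitRev
  rw [Finset.sum_range_succ, Finset.mul_sum]
  rw [add_comm]
  congr 1
  · simp
  · apply Finset.sum_congr rfl
    intro i hi
    simp only [Finset.mem_range] at hi
    have : (m + 1 - 1 - i) = (m - 1 - i) + 1 := by omega
    rw [this, pow_succ]
    ring

lemma bitRev_lt (m k : ℕ) : bitRev m k < 2^m := by
  induction m generalizing k with
  | zero => simp [bitRev]
  | succ m ih =>
    rw [bitRev_succ]
    have h1 : k % 2 ≤ 1 := by omega
    have := ih (k / 2)
    have : k % 2 * 2^m ≤ 2^m := by
      calc k % 2 * 2^m ≤ 1 * 2^m := Nat.mul_le_mul_right _ h1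
      _ = 2^m := one_mul _
    have hp : 2^(m+1) = 2^m + 2^m := by rw [pow_succ]; ring
    omega

lemma bitRev_mod (m k : ℕ) : bitRev m (k % 2^m) = bitRev m k := by
  unfold bitRev
  apply Finset.sum_congr rfl
  intro i hi
  simp only [Finset.mem_range] at hi
  congr 1
  have h1 : k % 2^m / 2^i = k / 2^i % 2^(m-i) := by
    rw [← Nat.mod_mul_right_div_self, ← pow_add]
    have : i + (m - i) = m := by omega
    rw [this]
  rw [h1, Nat.mod_mod_of_dvd _ (dvd_pow_self 2 (by omega))]

lemma bitRev_bitRev (m k : ℕ) (h : k < 2^m) : bitRev m (bitRev m k) = k := by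
  induction m generalizing k with
  | zero => interval_cases k; simp [bitRev]
  | succ m ih =>
    have hr : bitRev m (k / 2) < 2^m := bitRev_lt m (k / 2)
    have h1 : (k % 2 * 2^m + bitRev m (k/2)) / 2^m = k % 2 := by
      rw [mul_comm, Nat.mul_add_div (by positivity), Nat.div_eq_of_lt hr]
      omega
    have h2 : (k % 2 * 2^m + bitRev m (k/2)) % 2^m = bitRev m (k/2) := by
      rw [mul_comm, Nat.mul_add_mod, Nat.mod_eq_of_lt hr]
    rw [bitRev_succ', bitRev_succ, h1, ← bitRev_mod, h2, ih _ (by omega)]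
    omega

lemma bitRev_split (t m a b : ℕ) (ht : t ≤ m) (ha : a < 2^t) :
    bitRev m (a + b * 2^t) = bitRev (m-t) b + bitRev t a * 2^(m-t) := by
  induction t generalizing m a b with
  | zero =>
    interval_cases a
    simp [bitRev]
  | succ t ih =>
    obtain ⟨m', rfl⟩ : ∃ m', m = m' + 1 := ⟨m - 1, by omega⟩
    have hm : t ≤ m' := by omega
    have ha2 : a / 2 < 2^t := by
      have : a < 2 * 2^t := by rw [← pow_succ']; exact ha
      omega
    have hd : (a + b * 2^(t+1)) / 2 = a / 2 + b * 2^t := by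
      have : b * 2^(t+1) = b * 2^t * 2 := by rw [pow_succ]; ring
      rw [this, Nat.add_mul_div_right _ _ (by norm_num)]
    have hmod : (a + b * 2^(t+1)) % 2 = a % 2 := by
      have : (2:ℕ) ∣ b * 2^(t+1) := Dvd.dvd.mul_left (dvd_pow_self 2 (by omega)) b
      omega
    rw [bitRev_succ, hd, hmod, ih m' (a/2) b hm ha2, bitRev_succ]
    have e1 : m' + 1 - (t+1) = m' - t := by omega
    have e2 : (a % 2 * 2^t + bitRev t (a/2)) * 2^(m'-t) = a % 2 * 2^m' + bitRev t (a/2) * 2^(m'-t) := by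
      rw [add_mul, mul_assoc, ← pow_add]
      congr 3
      omega
    rw [e1, e2]
    ring

lemma bitRev_image_range (t : ℕ) :
    (Finset.range (2^t)).image (bitRev t) = Finset.range (2^t) := by
  ext x
  simp only [Finset.mem_image, Finset.mem_range]
  constructor
  · rintro ⟨a, ha, rfl⟩
    exact bitRev_lt t a
  · intro hx
    exact ⟨bitRev t x, bitRev_lt t x, bitRev_bitRev t x hx⟩

theorem stmt10 (m K : ℕ) (n : Fin K → ℕ) (hn : ∀ k, n k ≤ m)
    (hsorted : ∀ j k : Fin K, j ≤ k → n k ≤ n j)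
    (hsum : ∑ k : Fin K, 2 ^ (n k) ≤ 2 ^ m)
    (s : Fin K → ℕ) (hs : ∀ k, s k = ∑ j ∈ Finset.univ.filter (· < k), 2 ^ (n j)) :
    (∀ k : Fin K, ∃ d : ℕ, d < 2 ^ (m - n k) ∧
      (Finset.range (2 ^ (n k))).image (fun i => bitRev m (s k + i)) =
        (Finset.range (2 ^ (n k))).image (fun j => d + j * 2 ^ (m - n k))) ∧
    (∀ k k' : Fin K, k ≠ k' →
      Disjoint ((Finset.range (2 ^ (n k))).image (fun i => bitRev m (s k + i)))
        ((Finset.range (2 ^ (n k'))).image (fun i => bitRev m (s k' + i)))) := by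
  -- basic structural facts
  have hdvd : ∀ k : Fin K, 2 ^ (n k) ∣ s k := by
    intro k
    rw [hs k]
    apply Finset.dvd_sum
    intro j hj
    simp only [Finset.mem_filter] at hj
    exact pow_dvd_pow 2 (hsorted j k (le_of_lt hj.2))
  have hmono : ∀ k k' : Fin K, k < k' → s k + 2 ^ (n k) ≤ s k' := by
    intro k k' hkk'
    rw [hs k, hs k']
    have hnot : k ∉ Finset.univ.filter (· < k) := by simp
    have hsub : insert k (Finset.univ.filter (· < k)) ⊆ Finset.univ.filter (· < k') := by
      intro j hj
      simp only [Finset.mem_insert, Finset.mem_filter, Finset.mem_univ, true_and] at *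
      rcases hj with rfl | hj
      · exact hkk'
      · exact lt_trans hj hkk'
    calc ∑ j ∈ Finset.univ.filter (· < k), 2 ^ n j + 2 ^ n k
        = ∑ j ∈ insert k (Finset.univ.filter (· < k)), 2 ^ n j := by
          rw [Finset.sum_insert hnot]; ring
      _ ≤ ∑ j ∈ Finset.univ.filter (· < k'), 2 ^ n j :=
          Finset.sum_le_sum_of_subset hsub
  have hbound : ∀ k : Fin K, s k + 2 ^ (n k) ≤ 2 ^ m := by
    intro k
    rw [hs k]
    have hnot : k ∉ Finset.univ.filter (· < k) := by simp
    calc ∑ j ∈ Finset.univ.filter (· < k), 2 ^ n j + 2 ^ n k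
        = ∑ j ∈ insert k (Finset.univ.filter (· < k)), 2 ^ n j := by
          rw [Finset.sum_insert hnot]; ring
      _ ≤ ∑ j : Fin K, 2 ^ n j := Finset.sum_le_sum_of_subset (Finset.subset_univ _)
      _ ≤ 2 ^ m := hsum
  -- key pointwise formula
  have key : ∀ k : Fin K, ∀ i < 2 ^ (n k),
      bitRev m (s k + i) = bitRev (m - n k) (s k / 2 ^ (n k)) + bitRev (n k) i * 2 ^ (m - n k) := by
    intro k i hi
    obtain ⟨q, hq⟩ := hdvd k
    rw [hq, Nat.mul_div_cancel_left q (by positivity), mul_comm (2 ^ (n k)) q,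
      add_comm (q * 2 ^ n k) i, bitRev_split (n k) m i q (hn k) hi]
  constructor
  · intro k
    refine ⟨bitRev (m - n k) (s k / 2 ^ (n k)), bitRev_lt _ _, ?_⟩
    have h1 : (Finset.range (2 ^ (n k))).image (fun i => bitRev m (s k + i)) =
        (Finset.range (2 ^ (n k))).image
          (fun i => bitRev (m - n k) (s k / 2 ^ (n k)) + bitRev (n k) i * 2 ^ (m - n k)) := by
      apply Finset.image_congr
      intro i hi
      simp only [Finset.mem_coe, Finset.mem_range] at hi
      exact key k i hi
    rw [h1]
    rw [show (fun i => bitRev (m - n k) (s k / 2 ^ (n k)) + bitRev (n k) i * 2 ^ (m - n k)) =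
        (fun j => bitRev (m - n k) (s k / 2 ^ (n k)) + j * 2 ^ (m - n k)) ∘ bitRev (n k) from rfl]
    rw [← Finset.image_image, bitRev_image_range]
  · intro k k' hne
    have main : ∀ k k' : Fin K, k < k' →
        Disjoint ((Finset.range (2 ^ (n k))).image (fun i => bitRev m (s k + i)))
          ((Finset.range (2 ^ (n k'))).image (fun i => bitRev m (s k' + i))) := by
      intro k k' hkk'
      rw [Finset.disjoint_left]
      rintro a ha ha'
      simp only [Finset.mem_image, Finset.mem_range] at ha ha'
      obtain ⟨i, hi, hia⟩ := ha
      obtain ⟨i', hi', hia'⟩ := ha'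
      have hx : s k + i < 2 ^ m := by have := hbound k; omega
      have hx' : s k' + i' < 2 ^ m := by have := hbound k'; omega
      have : s k + i = s k' + i' := by
        have := congrArg (bitRev m) (hia.trans hia'.symm)
        rwa [bitRev_bitRev m _ hx, bitRev_bitRev m _ hx'] at this
      have := hmono k k' hkk'
      omega
    rcases lt_or_gt_of_ne hne with h | h
    · exact main k k' h
    · exact (main k' k h).symm
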